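/- For every n ≥ 6, ext_D(C_n; 2) ≤ ext_D(ℝ/ℤ, Aut(ℝ/ℤ); 2). -/

import Mathlib

/-- The circle `ℝ/ℤ`. -/
abbrev Circle1 := AddCircle (1 : ℝ)

/-- `Aut(ℝ/ℤ)`: the rotations `x ↦ x + α` and the reflections `x ↦ β - x`. -/
def IsAutCirc (f : Circle1 → Circle1) : Prop :=
  (∃ α : Circle1, ∀ x, f x = x + α) ∨ (∃ β : Circle1, ∀ x, f x = β - x)

/-- A `2`-coloring of `ℝ/ℤ` is distinguishing with respect to `Aut(ℝ/ℤ)` if the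
only automorphism preserving it is the identity. -/
def DistinguishingC (c : Circle1 → Fin 2) : Prop :=
  ∀ f : Circle1 → Circle1, IsAutCirc f → (∀ x, c (f x) = c x) → f = id

/-- `W` is a fixing set for `Aut(ℝ/ℤ)`: every non-identity automorphism moves
some element of `W`. -/
def FixingSetC (W : Set Circle1) : Prop :=
  ∀ f : Circle1 → Circle1, IsAutCirc f → f ≠ id → ∃ s ∈ W, f s ≠ s

/-- The Divisibility Condition: `(W + i/k) ∩ W = ∅` for all `k ∈ {2,3,4,5}` and
all `i ∈ {1, …, k-1}`. -/
def DivCond (W : Set Circle1) : Prop :=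
  ∀ k ∈ ({2, 3, 4, 5} : Set ℕ), ∀ i : ℕ, 1 ≤ i → i < k →
    ((fun w => w + (((i : ℝ) / (k : ℝ) : ℝ) : Circle1)) '' W) ∩ W = ∅

/-- `σ` is an automorphism of the graph `G`: a permutation of the vertices
preserving adjacency. -/
def IsGraphAut {V : Type*} (G : SimpleGraph V) (σ : Equiv.Perm V) : Prop :=
  ∀ u v : V, G.Adj (σ u) (σ v) ↔ G.Adj u v

/-- A `2`-coloring of the vertices of `G` is distinguishing if the only
automorphism of `G` preserving it is the identity. -/
def DistinguishingG {V : Type*} (G : SimpleGraph V) (c : V → Fin 2) : Prop :=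
  ∀ σ : Equiv.Perm V, IsGraphAut G σ → (∀ v, c (σ v) = c v) → σ = 1

/-- `W` is a fixing set for `Aut(G)`: every non-identity automorphism of `G`
moves some element of `W`. -/
def FixingSetG {V : Type*} (G : SimpleGraph V) (W : Set V) : Prop :=
  ∀ σ : Equiv.Perm V, IsGraphAut G σ → σ ≠ 1 → ∃ s ∈ W, σ s ≠ s

/-- `ExtPropG G m` says that for every fixing set `W ⊆ V(G)` with `|W| ≥ m`, every
`2`-coloring of `V(G) \ W` extends to a distinguishing `2`-coloring of `G`.
The distinguishing extension number `ext_D(G; 2)` is the least such `m`. -/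
def ExtPropG {V : Type*} (G : SimpleGraph V) (m : ℕ) : Prop :=
  ∀ W : Set V, FixingSetG G W → (m : Cardinal) ≤ Cardinal.mk W →
    ∀ c : V → Fin 2, ∃ c' : V → Fin 2, (∀ v ∉ W, c' v = c v) ∧ DistinguishingG G c'

/-- The cycle graph `C_n` on the vertex set `ℤ/nℤ`, where `i` is adjacent to `i ± 1`. -/
def CycleGraph (n : ℕ) : SimpleGraph (ZMod n) :=
  SimpleGraph.fromRel (fun i j => i - j = 1)

/-- `ExtPropC m` says that for every fixing set `W ⊆ ℝ/ℤ` with `|W| ≥ m`, every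
`2`-coloring of `(ℝ/ℤ) \ W` extends to a distinguishing `2`-coloring of `ℝ/ℤ`.
The distinguishing extension number `ext_D(ℝ/ℤ, Aut(ℝ/ℤ); 2)` is the least such `m`. -/
def ExtPropC (m : ℕ) : Prop :=
  ∀ W : Set Circle1, FixingSetC W → (m : Cardinal) ≤ Cardinal.mk W →
    ∀ c : Circle1 → Fin 2, ∃ c' : Circle1 → Fin 2, (∀ x ∉ W, c' x = c x) ∧ DistinguishingC c'

namespace CircExt

variable {n : ℕ}

noncomputable def emb (n : ℕ) (i : ZMod n) : Circle1 := (((i.val : ℝ) / (n : ℝ) : ℝ) : Circle1)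

lemma coe_nat_zero (q : ℕ) : (((q:ℝ)) : Circle1) = 0 := by
  rw [AddCircle.coe_eq_zero_iff]; exact ⟨q, by simp⟩

lemma emb_add (hn : 6 ≤ n) (i j : ZMod n) : emb n (i + j) = emb n i + emb n j := by
  haveI : NeZero n := ⟨by omega⟩
  have hn0 : (n : ℝ) ≠ 0 := by positivity
  have hval : (i.val + j.val : ℕ) = (i+j).val + n * ((i.val + j.val)/n) := by
    rw [ZMod.val_add]; exact (Nat.mod_add_div _ _).symm
  have hcast : ((i.val:ℝ)) + ((j.val:ℝ)) = ((i+j).val:ℝ) + (n:ℝ) * (((i.val + j.val)/n : ℕ):ℝ) := by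
    exact_mod_cast congrArg (Nat.cast : ℕ → ℝ) hval
  have hr : ((i.val:ℝ))/n + ((j.val:ℝ))/n
      = ((i+j).val:ℝ)/n + (((i.val + j.val)/n : ℕ) : ℝ) := by
    rw [← add_div, hcast, add_div, mul_div_cancel_left₀ _ hn0]
  show ((((i+j).val:ℝ)/n : ℝ) : Circle1) = (((i.val:ℝ)/n : ℝ) : Circle1) + (((j.val:ℝ)/n : ℝ) : Circle1)
  have key : ((((i.val:ℝ))/n + ((j.val:ℝ))/n : ℝ) : Circle1)
      = ((((i+j).val:ℝ)/n : ℝ) : Circle1) + ((((i.val + j.val)/n : ℕ) : ℝ) : Circle1) := by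
    rw [hr]; rfl
  rw [show ((((i.val:ℝ))/n + ((j.val:ℝ))/n : ℝ) : Circle1)
      = (((i.val:ℝ)/n : ℝ) : Circle1) + (((j.val:ℝ)/n : ℝ) : Circle1) from rfl] at key
  rw [coe_nat_zero, add_zero] at key
  exact key.symm

lemma emb_zero (hn : 6 ≤ n) : emb n 0 = 0 := by
  haveI : NeZero n := ⟨by omega⟩
  show (((ZMod.val (0 : ZMod n) : ℝ) / n : ℝ) : Circle1) = 0
  rw [ZMod.val_zero]
  norm_num

lemma emb_inj (hn : 6 ≤ n) : Function.Injective (emb n) := by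
  haveI : NeZero n := ⟨by omega⟩
  intro i j h
  have hn0 : (0:ℝ) < n := by positivity
  have h0 : (((i.val:ℝ)/n - (j.val:ℝ)/n : ℝ) : Circle1) = 0 := by
    rw [show (((i.val:ℝ)/n - (j.val:ℝ)/n : ℝ) : Circle1)
        = (((i.val:ℝ)/n : ℝ) : Circle1) - (((j.val:ℝ)/n : ℝ) : Circle1) from rfl, sub_eq_zero]
    exact h
  rw [AddCircle.coe_eq_zero_iff] at h0
  obtain ⟨k, hk⟩ := h0
  have hk1 : (k:ℝ) = ((i.val:ℝ) - (j.val:ℝ))/n := by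
    rw [← div_sub_div_same]; simpa using hk
  have hk' : (k:ℝ) * n = (i.val:ℝ) - (j.val:ℝ) := by
    rw [hk1, div_mul_cancel₀ _ (ne_of_gt hn0)]
  have hib : (i.val:ℝ) < n := by exact_mod_cast ZMod.val_lt i
  have hjb : (j.val:ℝ) < n := by exact_mod_cast ZMod.val_lt j
  have hi0 : (0:ℝ) ≤ (i.val:ℝ) := by positivity
  have hj0 : (0:ℝ) ≤ (j.val:ℝ) := by positivity
  have hk0 : k = 0 := by
    rcases lt_trichotomy k 0 with h' | h' | h'
    · exfalso
      have : (k:ℝ) ≤ -1 := by exact_mod_cast Int.le_of_lt_add_one (by simpa using h')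
      nlinarith
    · exact h'
    · exfalso
      have : (1:ℝ) ≤ (k:ℝ) := by exact_mod_cast h'
      nlinarith
  have hv : (i.val:ℝ) = (j.val:ℝ) := by rw [hk0] at hk'; push_cast at hk'; linarith
  exact ZMod.val_injective n (by exact_mod_cast hv)

lemma emb_sub (hn : 6 ≤ n) (i j : ZMod n) : emb n (i - j) = emb n i - emb n j := by
  have h := emb_add hn (i - j) j
  rw [sub_add_cancel] at h
  rw [h, add_sub_cancel_right]


variable {n : ℕ}

lemma adj_iff (x y : ZMod n) :
    (CycleGraph n).Adj x y ↔ x ≠ y ∧ (x - y = 1 ∨ y - x = 1) := by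
  simp [CycleGraph, SimpleGraph.fromRel_adj]

lemma natcast_ne_zero (hn : 6 ≤ n) {k : ℕ} (hk1 : 1 ≤ k) (hk : k < 6) : ((k : ℕ) : ZMod n) ≠ 0 := by
  haveI : NeZero n := ⟨by omega⟩
  intro h
  rw [ZMod.natCast_eq_zero_iff] at h
  exact absurd (Nat.le_of_dvd (by omega) h) (by omega)

lemma one_ne_zero' (hn : 6 ≤ n) : (1 : ZMod n) ≠ 0 := by
  have := natcast_ne_zero hn (k := 1) le_rfl (by omega); simpa using this

lemma two_ne_zero' (hn : 6 ≤ n) : (2 : ZMod n) ≠ 0 := by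
  have := natcast_ne_zero hn (k := 2) (by omega) (by omega); simpa using this

lemma classify (hn : 6 ≤ n) (σ : Equiv.Perm (ZMod n))
    (hσ : IsGraphAut (CycleGraph n) σ) :
    (∃ a, ∀ i, σ i = i + a) ∨ (∃ b, ∀ i, σ i = b - i) := by
  haveI : NeZero n := ⟨by omega⟩
  have h1 := one_ne_zero' hn
  have h2 := two_ne_zero' hn
  have adjsucc : ∀ x : ZMod n, (CycleGraph n).Adj x (x+1) := by
    intro x
    rw [adj_iff]
    exact ⟨fun h => h1 (left_eq_add.mp h), Or.inr (by ring)⟩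
  have nb : ∀ x y, (CycleGraph n).Adj x y → y = x + 1 ∨ y = x - 1 := by
    intro x y hxy
    rcases (adj_iff x y).mp hxy with ⟨-, h | h⟩
    · right; rw [← h]; ring
    · left; rw [← h]; ring
  have hstep : ∀ x : ZMod n, σ (x+1) = σ x + 1 ∨ σ (x+1) = σ x - 1 :=
    fun x => nb _ _ ((hσ x (x+1)).mpr (adjsucc x))
  have hdet : ∀ ε : ZMod n, (ε = 1 ∨ ε = -1) → ∀ x : ZMod n,
      σ (x+1) = σ x + ε → σ (x+1+1) = σ (x+1) + ε := by
    intro ε hε x hx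
    have hxx : x + 1 + 1 ≠ x := by
      intro h
      apply h2
      calc (2 : ZMod n) = (x+1+1) - x := by ring
        _ = 0 := by rw [h]; ring
    rcases hstep (x+1) with h | h
    · rcases hε with rfl | rfl
      · exact h
      · exfalso
        apply hxx
        apply σ.injective
        rw [h, hx]; ring
    · rcases hε with rfl | rfl
      · exfalso
        apply hxx
        apply σ.injective
        rw [h, hx]; ring
      · rw [h]; ring
  rcases hstep 0 with h0 | h0
  · left
    have key : ∀ k : ℕ, σ ((k:ZMod n)) = σ 0 + (k:ZMod n) ∧
        σ ((k:ZMod n)+1) = σ 0 + (k:ZMod n) + 1 := by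
      intro k
      induction k with
      | zero => simpa using h0
      | succ k ih =>
        have hx : σ ((k:ZMod n)+1) = σ ((k:ZMod n)) + 1 := by rw [ih.1, ih.2]
        have h3 := hdet 1 (Or.inl rfl) (k:ZMod n) hx
        constructor
        · push_cast; rw [ih.2]; ring
        · push_cast; rw [h3, ih.2]; ring
    refine ⟨σ 0, fun i => ?_⟩
    obtain ⟨k, rfl⟩ := ZMod.natCast_rightInverse.surjective i
    rw [(key k).1]; ring
  · right
    have key : ∀ k : ℕ, σ ((k:ZMod n)) = σ 0 - (k:ZMod n) ∧
        σ ((k:ZMod n)+1) = σ 0 - (k:ZMod n) - 1 := by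
      intro k
      induction k with
      | zero => simpa using h0
      | succ k ih =>
        have hx : σ ((k:ZMod n)+1) = σ ((k:ZMod n)) + (-1) := by rw [ih.1, ih.2]; ring
        have h3 := hdet (-1) (Or.inr rfl) (k:ZMod n) hx
        constructor
        · push_cast; rw [ih.2]; ring
        · push_cast; rw [h3, ih.2]; ring
    refine ⟨σ 0, fun i => ?_⟩
    obtain ⟨k, rfl⟩ := ZMod.natCast_rightInverse.surjective i
    rw [(key k).1]

end CircExt

/-- For every `n ≥ 6`, `ext_D(C_n; 2) ≤ ext_D(ℝ/ℤ, Aut(ℝ/ℤ); 2)`: every `m`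
witnessing the extension property for the circle also witnesses it for `C_n`. -/
theorem extension_number_cycle_le_circle (n : ℕ) (hn : 6 ≤ n) :
    ∀ m : ℕ, ExtPropC m → ExtPropG (CycleGraph n) m := by
  classical
  intro m hC W hW hcard c
  haveI : NeZero n := ⟨by omega⟩
  have hinj : Function.Injective (CircExt.emb n) := CircExt.emb_inj hn
  let e : ZMod n → Circle1 := CircExt.emb n
  have eadd : ∀ i j : ZMod n, e (i + j) = e i + e j := CircExt.emb_add hn
  have esub : ∀ i j : ZMod n, e (i - j) = e i - e j := CircExt.emb_sub hn
  have ezero : e 0 = 0 := CircExt.emb_zero hn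
  have einj : Function.Injective e := hinj
  -- the rotation by one is a nontrivial automorphism, so W is nonempty
  have rot1aut : IsGraphAut (CycleGraph n) (Equiv.addRight (1 : ZMod n)) := by
    intro u v
    simp only [Equiv.coe_addRight, CircExt.adj_iff]
    constructor
    · rintro ⟨hne, h⟩
      refine ⟨fun h' => hne (by rw [h']), ?_⟩
      rcases h with h | h
      · left; rw [← h]; ring
      · right; rw [← h]; ring
    · rintro ⟨hne, h⟩
      refine ⟨fun h' => hne (by simpa using h'), ?_⟩
      rcases h with h | h
      · left; rw [← h]; ring
      · right; rw [← h]; ring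
  have rot1ne : (Equiv.addRight (1 : ZMod n)) ≠ 1 := by
    intro h
    have := Equiv.ext_iff.mp h 0
    simp only [Equiv.coe_addRight, Equiv.Perm.coe_one, id_eq, zero_add] at this
    exact CircExt.one_ne_zero' hn this
  have hWne : W.Nonempty := by
    obtain ⟨s, hs, -⟩ := hW _ rot1aut rot1ne
    exact ⟨s, hs⟩
  obtain ⟨w₀, hw₀⟩ := hWne
  -- the image of W in the circle is a fixing set
  have hfix : FixingSetC (e '' W) := by
    intro f hf hfne
    rcases hf with ⟨α, hα⟩ | ⟨β, hβ⟩
    · have hα0 : α ≠ 0 := by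
        intro h
        apply hfne
        funext x
        rw [hα, h, add_zero]; rfl
      refine ⟨e w₀, ⟨w₀, hw₀, rfl⟩, ?_⟩
      rw [hα]
      intro h
      exact hα0 (by rwa [add_eq_left] at h)
    · by_cases hall : ∀ w ∈ W, f (e w) = e w
      · exfalso
        have h2w : ∀ w ∈ W, w + w = w₀ + w₀ := by
          intro w hw
          have hb1 : β = e w + e w := by
            have h' := hall w hw; rw [hβ] at h'
            exact sub_eq_iff_eq_add.mp h'
          have hb2 : β = e w₀ + e w₀ := by
            have h' := hall w₀ hw₀; rw [hβ] at h'
            exact sub_eq_iff_eq_add.mp h'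
          have : e (w + w) = e (w₀ + w₀) := by
            rw [eadd, eadd, ← hb1, ← hb2]
          exact einj this
        have hinvol : Function.Involutive (fun i : ZMod n => w₀ + w₀ - i) := by
          intro i; simp
        set τ : Equiv.Perm (ZMod n) := hinvol.toPerm _ with hτ
        have hτapp : ∀ i, τ i = w₀ + w₀ - i := fun i => rfl
        have hτaut : IsGraphAut (CycleGraph n) τ := by
          intro u v
          rw [hτapp, hτapp, CircExt.adj_iff, CircExt.adj_iff]
          simp only [ne_eq]
          rw [show (w₀ + w₀ - u = w₀ + w₀ - v) ↔ u = v from sub_right_inj,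
            show w₀ + w₀ - u - (w₀ + w₀ - v) = v - u from by ring,
            show w₀ + w₀ - v - (w₀ + w₀ - u) = u - v from by ring]
          tauto
        have hτne : τ ≠ 1 := by
          intro h
          have h' := Equiv.ext_iff.mp h (w₀ + 1)
          rw [hτapp] at h'
          simp only [Equiv.Perm.coe_one, id_eq] at h'
          apply CircExt.two_ne_zero' hn
          calc (2 : ZMod n) = (w₀ + 1) - (w₀ + w₀ - (w₀ + 1)) := by ring
            _ = 0 := by rw [h']; ring
        obtain ⟨s, hs, hss⟩ := hW τ hτaut hτne
        apply hss
        rw [hτapp, ← h2w s hs]; ring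
      · push_neg at hall
        obtain ⟨w, hw, hne⟩ := hall
        exact ⟨e w, ⟨w, hw, rfl⟩, hne⟩
  have hcard' : (m : Cardinal) ≤ Cardinal.mk (e '' W) := by
    rw [Cardinal.mk_image_eq einj]; exact hcard
  -- the precoloring on the circle induced by `c`
  set ct : Circle1 → Fin 2 := fun x => if h : ∃ i, e i = x then c h.choose else 0 with hct
  have hctemb : ∀ i, ct (e i) = c i := by
    intro i
    have hex : ∃ j, e j = e i := ⟨i, rfl⟩
    simp only [hct, dif_pos hex]
    rw [einj hex.choose_spec]
  obtain ⟨c', hc'eq, hc'dist⟩ := hC (e '' W) hfix hcard' ct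
  refine ⟨fun i => c' (e i), ?_, ?_⟩
  · intro v hv
    have hnmem : e v ∉ e '' W := by
      rintro ⟨w, hw, hww⟩
      exact hv (einj hww ▸ hw)
    show c' (e v) = c v
    rw [hc'eq _ hnmem, hctemb]
  · intro σ hσaut hσpres
    have hσpres' : ∀ v, c' (e (σ v)) = c' (e v) := hσpres
    rcases CircExt.classify hn σ hσaut with ⟨a, ha⟩ | ⟨b, hb⟩
    · -- rotation case
      set f : Circle1 → Circle1 := fun x => x + e a with hf
      have hpres : ∀ x, c' (f x) = c' x := by
        intro x
        by_cases hx : ∃ i, e i = x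
        · obtain ⟨i, rfl⟩ := hx
          show c' (e i + e a) = c' (e i)
          rw [← eadd]
          have h' := hσpres' i
          rwa [ha] at h'
        · have hfx : ¬ ∃ i, e i = f x := by
            rintro ⟨i, hi⟩
            refine hx ⟨i - a, ?_⟩
            rw [esub, hi]
            show x + e a - e a = x
            rw [add_sub_cancel_right]
          have h1 : x ∉ e '' W := by rintro ⟨w, -, hw⟩; exact hx ⟨w, hw⟩
          have h2 : f x ∉ e '' W := by rintro ⟨w, -, hw⟩; exact hfx ⟨w, hw⟩
          rw [hc'eq _ h1, hc'eq _ h2, hct]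
          simp only [dif_neg hx, dif_neg hfx]
      have hfid : f = id := hc'dist f (Or.inl ⟨e a, fun x => rfl⟩) hpres
      have hea : e a = 0 := by
        have h' := congrFun hfid 0
        simpa [hf] using h'
      have ha0 : a = 0 := einj (by rw [hea, ezero])
      apply Equiv.ext
      intro i
      rw [ha, ha0, add_zero]; rfl
    · -- reflection case
      set f : Circle1 → Circle1 := fun x => e b - x with hf
      have hpres : ∀ x, c' (f x) = c' x := by
        intro x
        by_cases hx : ∃ i, e i = x
        · obtain ⟨i, rfl⟩ := hx
          show c' (e b - e i) = c' (e i)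
          rw [← esub]
          have h' := hσpres' i
          rwa [hb] at h'
        · have hfx : ¬ ∃ i, e i = f x := by
            rintro ⟨i, hi⟩
            refine hx ⟨b - i, ?_⟩
            rw [esub, hi]
            show e b - (e b - x) = x
            rw [sub_sub_cancel]
          have h1 : x ∉ e '' W := by rintro ⟨w, -, hw⟩; exact hx ⟨w, hw⟩
          have h2 : f x ∉ e '' W := by rintro ⟨w, -, hw⟩; exact hfx ⟨w, hw⟩
          rw [hc'eq _ h1, hc'eq _ h2, hct]
          simp only [dif_neg hx, dif_neg hfx]
      have hfid : f = id := hc'dist f (Or.inr ⟨e b, fun x => rfl⟩) hpres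
      exfalso
      have hid : ∀ i : ZMod n, b - i = i := by
        intro i
        apply einj
        rw [esub]
        have h' := congrFun hfid (e i)
        simpa [hf] using h'
      apply CircExt.two_ne_zero' hn
      have h0 : b - 0 = 0 := hid 0
      have h1 : b - 1 = 1 := hid 1
      have hb0 : b = 0 := by simpa using h0
      rw [hb0] at h1
      calc (2 : ZMod n) = 1 - (0 - 1) := by ring
        _ = 1 - 1 := by rw [h1]
        _ = 0 := by ring
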